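/- Let ρ = [[A, B],[B†, C]] be a positive semidefinite block matrix where A and C are square blocks. Then tr(A)·tr(C) ≥ ‖B‖₁², where ‖B‖₁ is the trace norm of B. In particular, ‖B‖₁ ≤ tr(ρ)/2. -/

import Mathlib

open Matrix
open scoped ComplexOrder

/-- The matrix square root: equals the psd square root on positive semidefinite
matrices, and junk (`0`) elsewhere. -/
noncomputable def msqrt {n : Type*} [Fintype n] [DecidableEq n]
    (A : Matrix n n ℂ) : Matrix n n ℂ :=
  open scoped Classical in
  if h : A.PosSemidef then
    (h.1.eigenvectorUnitary : Matrix n n ℂ) * diagonal ((↑) ∘ (√·) ∘ h.1.eigenvalues) *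
      (star h.1.eigenvectorUnitary : Matrix n n ℂ) else 0

/-- The trace norm (Schatten 1-norm) of a complex matrix: `tr √(BᴴB)`. -/
noncomputable def traceNorm {m n : Type*} [Fintype m] [Fintype n] [DecidableEq n]
    (B : Matrix m n ℂ) : ℝ :=
  (msqrt (Bᴴ * B)).trace.re

open scoped InnerProductSpace


lemma trace_re_nonneg {n : Type*} [Fintype n] [DecidableEq n] {M : Matrix n n ℂ} (hM : M.PosSemidef) :
    0 ≤ M.trace.re := by
  rw [Matrix.trace, Complex.re_sum]
  apply Finset.sum_nonneg
  intro i _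
  have := hM.re_dotProduct_nonneg (Pi.single i 1)
  simpa [dotProduct, Matrix.mulVec, Pi.single_apply] using this

noncomputable def Matrix.PosSemidef.sqrt {n : Type*} [Fintype n] [DecidableEq n]
    {A : Matrix n n ℂ} (h : A.PosSemidef) : Matrix n n ℂ :=
  (h.1.eigenvectorUnitary : Matrix n n ℂ) * diagonal ((↑) ∘ (√·) ∘ h.1.eigenvalues) *
    (star h.1.eigenvectorUnitary : Matrix n n ℂ)

lemma Matrix.PosSemidef.posSemidef_sqrt {n : Type*} [Fintype n] [DecidableEq n]
    {A : Matrix n n ℂ} (h : A.PosSemidef) : h.sqrt.PosSemidef := by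
  have hd : (diagonal ((↑) ∘ (√·) ∘ h.1.eigenvalues : n → ℂ)).PosSemidef :=
    posSemidef_diagonal_iff.mpr fun i => by simp [Complex.zero_le_real, Real.sqrt_nonneg]
  have := hd.mul_mul_conjTranspose_same (h.1.eigenvectorUnitary : Matrix n n ℂ)
  rw [← star_eq_conjTranspose] at this
  exact this

lemma Matrix.PosSemidef.sqrt_mul_self {n : Type*} [Fintype n] [DecidableEq n]
    {A : Matrix n n ℂ} (h : A.PosSemidef) : h.sqrt * h.sqrt = A := by
  have h1 : star (h.1.eigenvectorUnitary : Matrix n n ℂ) * h.1.eigenvectorUnitary = 1 :=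
    (Unitary.mem_iff.mp h.1.eigenvectorUnitary.2).1
  have hs := h.1.spectral_theorem
  rw [Unitary.conjStarAlgAut_apply] at hs
  unfold sqrt
  conv_rhs => rw [hs]
  simp only [Matrix.mul_assoc]
  rw [← Matrix.mul_assoc (star _) _ _, h1, Matrix.one_mul, ← Matrix.mul_assoc (diagonal _),
    diagonal_mul_diagonal]
  congr 3
  funext i
  simp only [Function.comp_apply, ← Complex.ofReal_mul, Real.mul_self_sqrt (h.eigenvalues_nonneg i)]
  rfl

-- Lemma B
lemma trace_mul_re_nonneg {n : Type*} [Fintype n] [DecidableEq n] {M N : Matrix n n ℂ}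
    (hM : M.PosSemidef) (hN : N.PosSemidef) : 0 ≤ (M * N).trace.re := by
  have h1 : M * N = hM.sqrt * (hM.sqrt * N) := by
    rw [← mul_assoc, hM.sqrt_mul_self]
  rw [h1, Matrix.trace_mul_comm]
  have hpsd : (hM.sqrt * N * hM.sqrt).PosSemidef := by
    have := hN.mul_mul_conjTranspose_same hM.sqrt
    rwa [hM.posSemidef_sqrt.1.eq] at this
  exact trace_re_nonneg hpsd

lemma dot_aux {m n : Type*} [Fintype m] [Fintype n] (W : Matrix m n ℂ) (u : m → ℂ) (v : n → ℂ) :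
    star u ⬝ᵥ (W *ᵥ v) = star (Wᴴ *ᵥ u) ⬝ᵥ v := by
  rw [dotProduct_mulVec, star_mulVec, conjTranspose_conjTranspose]

noncomputable def euc {α : Type*} (v : α → ℂ) : EuclideanSpace ℂ α :=
  (WithLp.equiv 2 (α → ℂ)).symm v

lemma euc_inner {α : Type*} [Fintype α] (u v : α → ℂ) :
    ⟪euc u, euc v⟫_ℂ = star u ⬝ᵥ v :=
  by rw [dotProduct_comm]; rfl

lemma euc_self {α : Type*} [Fintype α] (v : α → ℂ) :
    star v ⬝ᵥ v = (‖euc v‖ ^ 2 : ℂ) := by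
  rw [← euc_inner, inner_self_eq_norm_sq_to_K]
  norm_cast

lemma contraction_flip {m n : Type*} [Fintype m] [Fintype n] [DecidableEq m] [DecidableEq n]
    {W : Matrix m n ℂ} (h : (1 - Wᴴ * W).PosSemidef) : (1 - W * Wᴴ).PosSemidef := by
  classical
  have key : ∀ z : n → ℂ, ‖euc (W *ᵥ z)‖ ≤ ‖euc z‖ := by
    intro z
    have h2 := h.dotProduct_mulVec_nonneg z
    rw [sub_mulVec, dotProduct_sub, one_mulVec, ← mulVec_mulVec, dot_aux,
      conjTranspose_conjTranspose, sub_nonneg, euc_self, euc_self] at h2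
    have : (‖euc (W *ᵥ z)‖ ^ 2 : ℝ) ≤ ‖euc z‖ ^ 2 := by exact_mod_cast h2
    nlinarith [norm_nonneg (euc (W *ᵥ z)), norm_nonneg (euc z)]
  rw [posSemidef_iff_dotProduct_mulVec]
  constructor
  · exact (isHermitian_one).sub (isHermitian_mul_conjTranspose_self W)
  intro x
  set y : n → ℂ := Wᴴ *ᵥ x with hy
  have hyx : ‖euc y‖ ≤ ‖euc x‖ := by
    have id1 : (star y) ⬝ᵥ y = ⟪euc (W *ᵥ y), euc x⟫_ℂ := by
      rw [euc_inner, hy, dot_aux, conjTranspose_conjTranspose]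
    have : (‖euc y‖ ^ 2 : ℝ) = ‖⟪euc (W *ᵥ y), euc x⟫_ℂ‖ := by
      rw [← id1, euc_self]
      simp
    have hcs := norm_inner_le_norm (𝕜 := ℂ) (euc (W *ᵥ y)) (euc x)
    have hk := key y
    nlinarith [norm_nonneg (euc y), norm_nonneg (euc x), norm_nonneg (euc (W *ᵥ y))]
  have expand : star x ⬝ᵥ ((1 - W * Wᴴ) *ᵥ x) = ((‖euc x‖ ^ 2 - ‖euc y‖ ^ 2 : ℝ) : ℂ) := by
    rw [sub_mulVec, dotProduct_sub, one_mulVec, ← mulVec_mulVec, dot_aux, ← hy,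
      euc_self, euc_self]
    push_cast
    ring
  rw [expand, Complex.zero_le_real]
  nlinarith [norm_nonneg (euc y), norm_nonneg (euc x)]

lemma trace_fromBlocks' {m k : Type*} [Fintype m] [Fintype k]
    (A : Matrix m m ℂ) (B : Matrix m k ℂ) (C : Matrix k m ℂ) (D : Matrix k k ℂ) :
    (fromBlocks A B C D).trace = A.trace + D.trace := by
  simp [Matrix.trace, Fintype.sum_sum_type, fromBlocks]

lemma block_conj_psd {m k : Type*} [Fintype m] [Fintype k] [DecidableEq m] [DecidableEq k]
    {A : Matrix m m ℂ} {B : Matrix m k ℂ} {C : Matrix k k ℂ}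
    (hρ : (fromBlocks A B Bᴴ C).PosSemidef) (X : Matrix k m ℂ) :
    (X * A * Xᴴ + Bᴴ * Xᴴ + (X * B + C)).PosSemidef := by
  set T : Matrix (m ⊕ k) (k ⊕ k) ℂ := fromBlocks Xᴴ 0 1 0 with hT
  have h := hρ.conjTranspose_mul_mul_same T
  have e : Tᴴ * fromBlocks A B Bᴴ C * T =
      fromBlocks (X * A * Xᴴ + Bᴴ * Xᴴ + (X * B + C)) 0 0 0 := by
    rw [hT, fromBlocks_conjTranspose, fromBlocks_multiply, fromBlocks_multiply]
    simp [Matrix.add_mul, Matrix.mul_assoc]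
  rw [e] at h
  have hsub := h.submatrix (Sum.inl : k → k ⊕ k)
  exact hsub

lemma traceNorm_eq {m n : Type*} [Fintype m] [Fintype n] [DecidableEq n]
    (B : Matrix m n ℂ) (h : (Bᴴ * B).PosSemidef) : traceNorm B = h.sqrt.trace.re := by
  rw [traceNorm, msqrt, dif_pos h]
  rfl

lemma conj_diag_mul {k : Type*} [Fintype k] [DecidableEq k] (U : Matrix k k ℂ)
    (hU : star U * U = 1) (p q : k → ℂ) :
    (U * diagonal p * star U) * (U * diagonal q * star U) = U * diagonal (p * q) * star U := by
  have : (U * diagonal p * star U) * (U * diagonal q * star U)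
      = U * (diagonal p * ((star U * U) * diagonal q)) * star U := by
    simp only [Matrix.mul_assoc]
  rw [this, hU, Matrix.one_mul, diagonal_mul_diagonal]
  rfl

lemma main_bound {m k : Type*} [Fintype m] [Fintype k] [DecidableEq m] [DecidableEq k]
    {A : Matrix m m ℂ} {B : Matrix m k ℂ} {C : Matrix k k ℂ}
    (hρ : (fromBlocks A B Bᴴ C).PosSemidef) :
    2 * traceNorm B ≤ A.trace.re + C.trace.re := by
  have hH : (Bᴴ * B).PosSemidef := posSemidef_conjTranspose_mul_self B
  set hHer : (Bᴴ * B).IsHermitian := hH.1 with hHerdef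
  set U : Matrix k k ℂ := (hHer.eigenvectorUnitary : Matrix k k ℂ) with hUdef
  set d : k → ℝ := hHer.eigenvalues with hddef
  have hd : ∀ i, 0 ≤ d i := hH.eigenvalues_nonneg
  have h1 : star U * U = 1 := (Unitary.mem_iff.mp hHer.eigenvectorUnitary.2).1
  have h2 : U * star U = 1 := (Unitary.mem_iff.mp hHer.eigenvectorUnitary.2).2
  have hspec : Bᴴ * B = U * diagonal (Complex.ofReal ∘ d) * star U := hHer.spectral_theorem
  set g : k → ℂ := fun i => ((if d i = 0 then 0 else (Real.sqrt (d i))⁻¹ : ℝ) : ℂ) with hgdef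
  set G : Matrix k k ℂ := U * diagonal g * star U with hGdef
  set W : Matrix m k ℂ := B * G with hWdef
  have hgstar : star g = g := by
    funext i
    simp [hgdef, ← Complex.ofReal_inv]
  have hGH : Gᴴ = G := by
    rw [hGdef, conjTranspose_mul, conjTranspose_mul, diagonal_conjTranspose, hgstar,
      ← star_eq_conjTranspose, ← star_eq_conjTranspose, star_star, Matrix.mul_assoc]
  have hWH : Wᴴ = G * Bᴴ := by rw [hWdef, conjTranspose_mul, hGH]
  have hWB : Wᴴ * B = U * diagonal (Complex.ofReal ∘ Real.sqrt ∘ d) * star U := by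
    rw [hWH, Matrix.mul_assoc, hspec, hGdef, conj_diag_mul U h1]
    have hfun1 : (g * (Complex.ofReal ∘ d)) = Complex.ofReal ∘ Real.sqrt ∘ d := by
      funext i
      show g i * Complex.ofReal (d i) = Complex.ofReal (Real.sqrt (d i))
      rw [hgdef]
      dsimp only
      by_cases hdi : d i = 0
      · simp [hdi]
      · rw [if_neg hdi, ← Complex.ofReal_mul]
        congr 1
        have hs : Real.sqrt (d i) ≠ 0 :=
          Real.sqrt_ne_zero'.mpr (lt_of_le_of_ne (hd i) (Ne.symm hdi))
        field_simp
        rw [Real.sq_sqrt (hd i)]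
    rw [hfun1]
  have hsqrt : hH.sqrt = U * diagonal (Complex.ofReal ∘ Real.sqrt ∘ d) * star U := rfl
  set χ : k → ℂ := fun i => if d i = 0 then 0 else 1 with hχdef
  have hWW : Wᴴ * W = U * diagonal χ * star U := by
    rw [hWdef, ← Matrix.mul_assoc, hWB, hGdef, conj_diag_mul U h1]
    have hfun2 : ((Complex.ofReal ∘ Real.sqrt ∘ d) * g) = χ := by
      funext i
      show Complex.ofReal (Real.sqrt (d i)) * g i = χ i
      rw [hgdef, hχdef]
      dsimp only
      by_cases hdi : d i = 0
      · simp [hdi]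
      · rw [if_neg hdi, if_neg hdi, ← Complex.ofReal_mul]
        rw [mul_inv_cancel₀ (Real.sqrt_ne_zero'.mpr (lt_of_le_of_ne (hd i) (Ne.symm hdi)))]
        norm_num
    rw [hfun2]
  have hcontr : ((1 : Matrix k k ℂ) - Wᴴ * W).PosSemidef := by
    have hone : (1 : Matrix k k ℂ) = U * diagonal (fun _ => (1:ℂ)) * star U := by
      rw [diagonal_one, Matrix.mul_one, h2]
    have : (1 : Matrix k k ℂ) - Wᴴ * W = U * diagonal (fun i => 1 - χ i) * star U := by
      rw [hWW, hone]
      rw [← Matrix.sub_mul, ← Matrix.mul_sub, diagonal_sub]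
    rw [this]
    have hdiag : (diagonal (fun i => 1 - χ i)).PosSemidef := by
      refine posSemidef_diagonal_iff.mpr fun i => ?_
      simp only [hχdef]
      by_cases hdi : d i = 0 <;> simp [hdi]
    have := hdiag.mul_mul_conjTranspose_same U
    rwa [← star_eq_conjTranspose] at this
  have hWWflip := contraction_flip hcontr
  have hA' : A.PosSemidef := hρ.submatrix Sum.inl
  have bound1 : (Wᴴ * A * W).trace.re ≤ A.trace.re := by
    have e1 : (Wᴴ * A * W).trace = (A * (W * Wᴴ)).trace := by
      rw [Matrix.trace_mul_cycle, Matrix.trace_mul_comm, Matrix.mul_assoc]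
    have e2 : A.trace - (A * (W * Wᴴ)).trace = (A * (1 - W * Wᴴ)).trace := by
      rw [Matrix.mul_sub, Matrix.mul_one, trace_sub]
    have h3 := trace_mul_re_nonneg hA' hWWflip
    have e3 := congrArg Complex.re e2
    rw [Complex.sub_re] at e3
    rw [e1]
    linarith
  have hpsd := block_conj_psd hρ (-Wᴴ)
  have hsimp : (-Wᴴ) * A * (-Wᴴ)ᴴ + Bᴴ * (-Wᴴ)ᴴ + ((-Wᴴ) * B + C)
      = Wᴴ * A * W + (-(Bᴴ * W)) + (-(Wᴴ * B) + C) := by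
    rw [conjTranspose_neg, conjTranspose_conjTranspose]
    simp [Matrix.neg_mul, Matrix.mul_neg]
  rw [hsimp] at hpsd
  have htr := trace_re_nonneg hpsd
  have hBW : Bᴴ * W = Wᴴ * B := by
    have e4 : (Wᴴ * B)ᴴ = Bᴴ * W := by rw [conjTranspose_mul, conjTranspose_conjTranspose]
    rw [← e4, hWB, ← hsqrt, hH.posSemidef_sqrt.1.eq]
  have hT : traceNorm B = (Wᴴ * B).trace.re := by
    rw [traceNorm_eq B hH, hsqrt, ← hWB]
  rw [hBW] at htr
  simp only [trace_add, trace_neg] at htr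
  simp only [Complex.add_re, Complex.neg_re] at htr
  rw [hT]
  linarith

section
variable {m k : Type*} [Fintype m] [Fintype k] [DecidableEq m] [DecidableEq k]

lemma scaled_psd {A : Matrix m m ℂ} {B : Matrix m k ℂ} {C : Matrix k k ℂ}
    (hρ : (fromBlocks A B Bᴴ C).PosSemidef) {t : ℝ} (ht : 0 < t) :
    (fromBlocks ((t:ℂ) • A) B Bᴴ ((t⁻¹:ℂ) • C)).PosSemidef := by
  set s : ℝ := Real.sqrt t with hs
  have hs0 : s ≠ 0 := Real.sqrt_ne_zero'.mpr ht
  set D : Matrix (m ⊕ k) (m ⊕ k) ℂ :=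
    fromBlocks ((s:ℂ) • 1) 0 0 (((s⁻¹:ℝ):ℂ) • 1) with hD
  have h := hρ.conjTranspose_mul_mul_same D
  have r1 : s * s = t := Real.mul_self_sqrt ht.le
  have r2 : s⁻¹ * s = 1 := inv_mul_cancel₀ hs0
  have r3 : s * s⁻¹ = 1 := mul_inv_cancel₀ hs0
  have r4 : s⁻¹ * s⁻¹ = t⁻¹ := by rw [← mul_inv, r1]
  have e : Dᴴ * fromBlocks A B Bᴴ C * D = fromBlocks ((t:ℂ) • A) B Bᴴ ((t⁻¹:ℂ) • C) := by
    rw [hD, fromBlocks_conjTranspose, fromBlocks_multiply, fromBlocks_multiply]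
    simp only [conjTranspose_smul, conjTranspose_one, conjTranspose_zero,
      Matrix.smul_mul, Matrix.mul_smul, Matrix.one_mul, Matrix.mul_one,
      Matrix.zero_mul, Matrix.mul_zero, add_zero, zero_add, smul_smul,
      Complex.star_def, Complex.conj_ofReal]
    simp only [← Complex.ofReal_mul, r1, r2, r3, r4, Complex.ofReal_one, one_smul]
    norm_cast
  rw [e] at h
  exact h
end

/-- For a positive semidefinite block matrix `ρ = [[A,B],[Bᴴ,C]]`,
`tr(A)·tr(C) ≥ ‖B‖₁²`; in particular `‖B‖₁ ≤ tr(ρ)/2`. -/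
theorem psd_block_traceNorm {m k : ℕ}
    (A : Matrix (Fin m) (Fin m) ℂ) (B : Matrix (Fin m) (Fin k) ℂ)
    (C : Matrix (Fin k) (Fin k) ℂ)
    (hρ : (Matrix.fromBlocks A B Bᴴ C).PosSemidef) :
    traceNorm B ^ 2 ≤ A.trace.re * C.trace.re
    ∧ traceNorm B ≤ (Matrix.fromBlocks A B Bᴴ C).trace.re / 2 := by
  have hmain := main_bound hρ
  have htrblock : (fromBlocks A B Bᴴ C).trace.re = A.trace.re + C.trace.re := by
    rw [trace_fromBlocks', Complex.add_re]
  have hH : (Bᴴ * B).PosSemidef := posSemidef_conjTranspose_mul_self B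
  have hN0 : 0 ≤ traceNorm B := by
    rw [traceNorm_eq B hH]
    exact trace_re_nonneg hH.posSemidef_sqrt
  have hA' : A.PosSemidef := hρ.submatrix Sum.inl
  have hC' : C.PosSemidef := hρ.submatrix Sum.inr
  have htA : 0 ≤ A.trace.re := trace_re_nonneg hA'
  have htC : 0 ≤ C.trace.re := trace_re_nonneg hC'
  have spec : ∀ t : ℝ, 0 < t → 2 * traceNorm B ≤ t * A.trace.re + t⁻¹ * C.trace.re := by
    intro t ht
    have h := main_bound (scaled_psd hρ ht)
    have e1 : ((t:ℂ) • A).trace.re = t * A.trace.re := by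
      rw [trace_smul]
      simp [Complex.real_smul, Complex.mul_re]
    have e2 : (((t:ℂ))⁻¹ • C).trace.re = t⁻¹ * C.trace.re := by
      rw [← Complex.ofReal_inv, trace_smul]
      simp [Complex.real_smul, Complex.mul_re]
    rw [e1, e2] at h
    exact h
  refine ⟨?_, by linarith⟩
  rcases eq_or_lt_of_le hN0 with hN | hN
  · rw [← hN]
    nlinarith [mul_nonneg htA htC]
  · by_cases hA0 : A.trace.re = 0
    · exfalso
      have ht : 0 < C.trace.re / traceNorm B + 1 := by positivity
      have h := spec _ ht
      have hu : (C.trace.re / traceNorm B + 1) * (C.trace.re / traceNorm B + 1)⁻¹ = 1 :=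
        mul_inv_cancel₀ ht.ne'
      have htN : (C.trace.re / traceNorm B + 1) * traceNorm B = C.trace.re + traceNorm B := by
        field_simp
      rw [hA0, mul_zero, zero_add] at h
      have h6 : (C.trace.re / traceNorm B + 1) * ((C.trace.re / traceNorm B + 1)⁻¹ * C.trace.re)
          = C.trace.re := by
        rw [← mul_assoc, hu, one_mul]
      nlinarith [mul_le_mul_of_nonneg_left h ht.le, h6, htN, hN, htC]
    · have htA' : 0 < A.trace.re := lt_of_le_of_ne htA (Ne.symm hA0)
      have ht : 0 < traceNorm B / A.trace.re := by positivity
      have h := spec _ ht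
      have e3 : traceNorm B / A.trace.re * A.trace.re = traceNorm B :=
        div_mul_cancel₀ _ hA0
      have e4 : (traceNorm B / A.trace.re)⁻¹ = A.trace.re / traceNorm B := by
        rw [inv_div]
      have e5 : A.trace.re / traceNorm B * traceNorm B = A.trace.re :=
        div_mul_cancel₀ _ hN.ne'
      rw [e3, e4] at h
      nlinarith [mul_le_mul_of_nonneg_left h hN.le, e5, htC, htA', hN]
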